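/- Fix g ≥ 1. Let Γ be the group presented by generators α₁, …, α_g, β₁, …, β_g, J subject to the relations that J commutes with each αᵢ and each βᵢ, and that ∏_{i=1}^{g} [αᵢ, βᵢ] = J. Then the element J has infinite order in Γ; that is, the subgroup of Γ generated by J is isomorphic to ℤ. -/

import Mathlib

open scoped commutatorElement

/-- Generator `αᵢ` in the free group on `α₁, …, α_g, β₁, …, β_g, J`. -/
def SurfaceExt.a {g : ℕ} (i : Fin g) : FreeGroup (Fin g ⊕ Fin g ⊕ Unit) :=
  FreeGroup.of (Sum.inl i)

/-- Generator `βᵢ` in the free group on `α₁, …, α_g, β₁, …, β_g, J`. -/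
def SurfaceExt.b {g : ℕ} (i : Fin g) : FreeGroup (Fin g ⊕ Fin g ⊕ Unit) :=
  FreeGroup.of (Sum.inr (Sum.inl i))

/-- The central generator `J` in the free group on `α₁, …, α_g, β₁, …, β_g, J`. -/
def SurfaceExt.J {g : ℕ} : FreeGroup (Fin g ⊕ Fin g ⊕ Unit) :=
  FreeGroup.of (Sum.inr (Sum.inr ()))

/-- Relators of the Atiyah–Bott central extension `Γ`: `J` commutes with each `αᵢ`
and each `βᵢ`, and `∏ᵢ [αᵢ, βᵢ] = J` (expressed as `(∏ᵢ ⁅αᵢ, βᵢ⁆) * J⁻¹`). -/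
def SurfaceExt.rels (g : ℕ) : Set (FreeGroup (Fin g ⊕ Fin g ⊕ Unit)) :=
  (Set.range fun i : Fin g => ⁅SurfaceExt.J (g := g), SurfaceExt.a i⁆) ∪
  (Set.range fun i : Fin g => ⁅SurfaceExt.J (g := g), SurfaceExt.b i⁆) ∪
  {(List.ofFn fun i : Fin g => ⁅SurfaceExt.a i, SurfaceExt.b i⁆).prod * SurfaceExt.J⁻¹}


/-- Integer Heisenberg group. -/
@[ext] structure Heis where
  x : ℤ
  y : ℤ
  z : ℤ

instance : Mul Heis := ⟨fun a b => ⟨a.x + b.x, a.y + b.y, a.z + b.z + a.x * b.y⟩⟩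
instance : One Heis := ⟨⟨0, 0, 0⟩⟩
instance : Inv Heis := ⟨fun a => ⟨-a.x, -a.y, -a.z + a.x * a.y⟩⟩

@[simp] lemma heis_mul_x (a b : Heis) : (a * b).x = a.x + b.x := rfl
@[simp] lemma heis_mul_y (a b : Heis) : (a * b).y = a.y + b.y := rfl
@[simp] lemma heis_mul_z (a b : Heis) : (a * b).z = a.z + b.z + a.x * b.y := rfl
@[simp] lemma heis_one_x : (1 : Heis).x = 0 := rfl
@[simp] lemma heis_one_y : (1 : Heis).y = 0 := rfl
@[simp] lemma heis_one_z : (1 : Heis).z = 0 := rfl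
@[simp] lemma heis_inv_x (a : Heis) : a⁻¹.x = -a.x := rfl
@[simp] lemma heis_inv_y (a : Heis) : a⁻¹.y = -a.y := rfl
@[simp] lemma heis_inv_z (a : Heis) : a⁻¹.z = -a.z + a.x * a.y := rfl

instance : Group Heis where
  mul_assoc a b c := by ext <;> simp <;> ring
  one_mul a := by ext <;> simp
  mul_one a := by ext <;> simp
  inv_mul_cancel a := by ext <;> simp <;> ring

def HX : Heis := ⟨1,0,0⟩
def HY : Heis := ⟨0,1,0⟩
def HZ : Heis := ⟨0,0,1⟩

lemma heis_comm_XY : ⁅HX, HY⁆ = HZ := by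
  simp only [commutatorElement_def]
  ext <;> simp [HX, HY, HZ]

lemma HZ_central (a : Heis) : ⁅HZ, a⁆ = 1 := by
  simp only [commutatorElement_def]
  ext <;> simp [HZ] <;> ring

lemma HZ_pow (n : ℕ) : HZ ^ n = ⟨0, 0, (n : ℤ)⟩ := by
  induction n with
  | zero => rfl
  | succ k ih => rw [pow_succ, ih]; ext <;> simp [HZ]

lemma HZ_not_finOrder : ¬ IsOfFinOrder HZ := by
  rw [isOfFinOrder_iff_pow_eq_one]
  rintro ⟨n, hn, h⟩
  rw [HZ_pow] at h
  have := congrArg Heis.z h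
  simp at this
  omega

/-- The representation of the generators in the Heisenberg group. -/
def heisRep (g : ℕ) : Fin g ⊕ Fin g ⊕ Unit → Heis :=
  Sum.elim (fun i => if (i : ℕ) = 0 then HX else 1)
    (Sum.elim (fun i => if (i : ℕ) = 0 then HY else 1) (fun _ => HZ))

lemma heisRep_rels (g : ℕ) (hg : 1 ≤ g) :
    ∀ r ∈ SurfaceExt.rels g, FreeGroup.lift (heisRep g) r = 1 := by
  obtain ⟨k, rfl⟩ : ∃ k, g = k + 1 := ⟨g - 1, by omega⟩
  rintro r ((⟨i, rfl⟩ | ⟨i, rfl⟩) | rfl)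
  · simp only [commutatorElement_def, map_mul, map_inv, SurfaceExt.J, SurfaceExt.a,
      FreeGroup.lift_apply_of, heisRep, Sum.elim_inr, Sum.elim_inl]
    have := HZ_central (if (i : ℕ) = 0 then HX else 1)
    simpa [commutatorElement_def] using this
  · simp only [commutatorElement_def, map_mul, map_inv, SurfaceExt.J, SurfaceExt.b,
      FreeGroup.lift_apply_of, heisRep, Sum.elim_inr, Sum.elim_inl]
    have := HZ_central (if (i : ℕ) = 0 then HY else 1)
    simpa [commutatorElement_def] using this
  · rw [map_mul, map_inv, map_list_prod, List.map_ofFn]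
    have hJ : FreeGroup.lift (heisRep (k+1)) SurfaceExt.J = HZ := by
      simp [SurfaceExt.J, heisRep]
    have hfn : ∀ i : Fin (k+1),
        (FreeGroup.lift (heisRep (k+1)) ∘ fun i : Fin (k+1) => ⁅SurfaceExt.a i, SurfaceExt.b i⁆) i
        = if i.val = 0 then HZ else 1 := by
      intro i
      simp only [Function.comp_apply, commutatorElement_def, map_mul, map_inv,
        SurfaceExt.a, SurfaceExt.b, FreeGroup.lift_apply_of, heisRep, Sum.elim_inl, Sum.elim_inr]
      by_cases h : i.val = 0
      · simpa [h, commutatorElement_def] using heis_comm_XY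
      · simp [h]
    rw [funext hfn, hJ]
    rw [List.ofFn_succ]
    simp only [Fin.val_zero, if_pos rfl, Fin.val_succ]
    rw [List.prod_cons]
    have : (List.ofFn fun i : Fin k => if (i:ℕ) + 1 = 0 then HZ else 1).prod = 1 := by
      apply List.prod_eq_one
      intro x hx
      simp only [List.mem_ofFn] at hx
      obtain ⟨i, rfl⟩ := hx
      simp
    simp [this]

/-- **`J` has infinite order in `Γ`.** In the Atiyah–Bott central extension `Γ` of the
genus-`g` surface group, the element `J` is not of finite order; equivalently, the
subgroup it generates is infinite cyclic, i.e. isomorphic to `ℤ`. -/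
theorem J_infinite_order_in_gamma (g : ℕ) (hg : 1 ≤ g) :
    ¬ IsOfFinOrder
        (PresentedGroup.of (Sum.inr (Sum.inr ())) : PresentedGroup (SurfaceExt.rels g)) ∧
    Nonempty
      ((Subgroup.zpowers
          (PresentedGroup.of (Sum.inr (Sum.inr ())) : PresentedGroup (SurfaceExt.rels g)))
        ≃* Multiplicative ℤ) := by
  set Jg : PresentedGroup (SurfaceExt.rels g) := PresentedGroup.of (Sum.inr (Sum.inr ()))
  have hmap : PresentedGroup.toGroup (heisRep_rels g hg) Jg = HZ := by
    simp [Jg, PresentedGroup.toGroup.of, heisRep]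
  have hnot : ¬ IsOfFinOrder Jg := by
    intro h
    exact HZ_not_finOrder (hmap ▸ (PresentedGroup.toGroup (heisRep_rels g hg)).isOfFinOrder h)
  refine ⟨hnot, ?_⟩
  have hinj : Function.Injective (zpowersHom _ Jg) := by
    have h1 : Function.Injective fun n : ℤ => Jg ^ n :=
      injective_zpow_iff_not_isOfFinOrder.mpr hnot
    intro a b hab
    exact h1 hab
  exact ⟨((MulEquiv.subgroupCongr (Subgroup.range_zpowersHom Jg).symm).trans
    (MonoidHom.ofInjective hinj).symm)⟩
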